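/- If φ : G₁ ×_{ε₁} G₂ → G₁ ×_{ε₂} G₂ is a group isomorphism, then the subgroup φ₂₁(G₁) = { pr₂(φ(x,1)) : x ∈ G₁ } is a normal subgroup of G₂ contained in the centralizer of φ₂₂(G₂). -/

import Mathlib

/-- A normalized 2-cocycle of `B` with coefficients in `A` (trivial action). -/
def IsCocycle {A B : Type*} [Group A] [Group B] (ε : B → B → A) : Prop :=
  (∀ g h k : B, ε h g * ε (h * g) k = ε g k * ε h (g * k)) ∧
  (∀ g : B, ε g 1 = 1) ∧ (∀ g : B, ε 1 g = 1)

/-- The twisted multiplication on `G₁ × G₂` induced by a 2-cocycle `ε`. -/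
def twMul {G₁ G₂ : Type*} [Group G₁] [Group G₂] (ε : G₂ → G₂ → G₁) :
    G₁ × G₂ → G₁ × G₂ → G₁ × G₂ :=
  fun p q => (p.1 * q.1 * ε p.2 q.2, p.2 * q.2)

/-- `φ` is a group homomorphism from `G₁ ×_{ε₁} G₂` to `G₁ ×_{ε₂} G₂`. -/
def IsTwHom {G₁ G₂ : Type*} [Group G₁] [Group G₂] (ε₁ ε₂ : G₂ → G₂ → G₁)
    (φ : G₁ × G₂ → G₁ × G₂) : Prop :=
  ∀ p q, φ (twMul ε₁ p q) = twMul ε₂ (φ p) (φ q)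

theorem stmt_14 {G₁ G₂ : Type*} [CommGroup G₁] [Group G₂]
    (ε₁ ε₂ : G₂ → G₂ → G₁) (hε₁ : IsCocycle ε₁) (hε₂ : IsCocycle ε₂)
    (φ : G₁ × G₂ → G₁ × G₂) (hφ : IsTwHom ε₁ ε₂ φ) (hbij : Function.Bijective φ) :
    let S : Set G₂ := Set.range fun x : G₁ => (φ (x, 1)).2
    (1 ∈ S) ∧ (∀ a ∈ S, ∀ b ∈ S, a * b ∈ S) ∧ (∀ a ∈ S, a⁻¹ ∈ S) ∧
    (∀ g : G₂, ∀ a ∈ S, g * a * g⁻¹ ∈ S) ∧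
    (∀ a ∈ S, ∀ y : G₂, a * (φ (1, y)).2 = (φ (1, y)).2 * a) := by
  intro S
  obtain ⟨hc₁, hr₁, hl₁⟩ := hε₁
  obtain ⟨hc₂, hr₂, hl₂⟩ := hε₂
  -- φ(1,1) = (1,1)
  have hone : φ (1, 1) = (1, 1) := by
    have h := hφ (1, 1) (1, 1)
    simp only [twMul, hr₁, one_mul, mul_one] at h
    have hs : (φ (1, 1)).2 = 1 := by
      have h2 : (φ (1, 1)).2 = (φ (1, 1)).2 * (φ (1, 1)).2 := congrArg Prod.snd h
      exact right_eq_mul.mp h2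
    have ha : (φ (1, 1)).1 = 1 := by
      have h1 : (φ (1, 1)).1 = (φ (1, 1)).1 * (φ (1, 1)).1 * ε₂ (φ (1, 1)).2 (φ (1, 1)).2 :=
        congrArg Prod.fst h
      rw [hs, hr₂, mul_one] at h1
      exact right_eq_mul.mp h1
    rw [Prod.ext_iff]; exact ⟨ha, hs⟩
  -- (x,1) is central in the ε₁-twisted group
  have hcentral₁ : ∀ (x : G₁) (p : G₁ × G₂),
      twMul ε₁ (x, 1) p = twMul ε₁ p (x, 1) := by
    intro x p
    simp only [twMul, hr₁, hl₁, one_mul, mul_one]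
    rw [mul_comm]
  -- φ(x,1) commutes (twistedly) with everything
  have hcentral : ∀ (x : G₁) (q : G₁ × G₂),
      twMul ε₂ (φ (x, 1)) q = twMul ε₂ q (φ (x, 1)) := by
    intro x q
    obtain ⟨p, rfl⟩ := hbij.2 q
    rw [← hφ, ← hφ, hcentral₁]
  -- second component of φ(x,1) is central in G₂
  have hz : ∀ (x : G₁) (g : G₂), (φ (x, 1)).2 * g = g * (φ (x, 1)).2 := by
    intro x g
    have := congrArg Prod.snd (hcentral x (1, g))
    simpa [twMul] using this
  -- f(x) := (φ(x,1)).2 is multiplicative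
  have hmul : ∀ x y : G₁, (φ (x * y, 1)).2 = (φ (x, 1)).2 * (φ (y, 1)).2 := by
    intro x y
    have h := hφ (x, 1) (y, 1)
    have h2 := congrArg Prod.snd h
    simp only [twMul, hr₁, mul_one] at h2
    exact h2
  refine ⟨⟨1, by show (φ ((1:G₁), (1:G₂))).2 = 1; rw [hone]⟩, ?_, ?_, ?_, ?_⟩
  · rintro a ⟨x, rfl⟩ b ⟨y, rfl⟩
    exact ⟨x * y, (hmul x y)⟩
  · rintro a ⟨x, rfl⟩
    refine ⟨x⁻¹, ?_⟩
    have := hmul x⁻¹ x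
    simp only [inv_mul_cancel, hone] at this
    exact eq_inv_of_mul_eq_one_left this.symm
  · rintro g a ⟨x, rfl⟩
    refine ⟨x, ?_⟩
    rw [← hz x g, mul_assoc, mul_inv_cancel, mul_one]
  · rintro a ⟨x, rfl⟩ y
    exact hz x _
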